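/- If an open connected set Ω ⊂ ℂ^d satisfies the star condition, then Ω is a Carathéodory domain, i.e., Ω equals the interior of its closure. -/

import Mathlib

open Set Metric

/-- The star condition for an open connected subset of ℂ^d. -/
def StarCondition {d : ℕ} (Ω : Set (EuclideanSpace ℂ (Fin d))) : Prop :=
  ∀ ζ ∈ frontier Ω, ∀ ε > (0:ℝ), ∃ w : EuclideanSpace ℂ (Fin d),
    w ∉ closure Ω ∧ ‖w - ζ‖ < ε ∧ ∃ v : EuclideanSpace ℂ (Fin d), v ≠ 0 ∧
      ∀ z : EuclideanSpace ℂ (Fin d), (inner ℂ z v : ℂ) = (inner ℂ w v : ℂ) → z ∉ closure Ω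

theorem stmt_11 {d : ℕ} (Ω : Set (EuclideanSpace ℂ (Fin d)))
    (hΩopen : IsOpen Ω) (hΩconn : IsConnected Ω) (hstar : StarCondition Ω) :
    Ω = interior (closure Ω) := by
  apply Subset.antisymm
  · exact interior_maximal subset_closure hΩopen
  · intro x hx
    by_contra hxΩ
    have hxfr : x ∈ frontier Ω := by
      refine ⟨interior_subset hx, ?_⟩
      rwa [hΩopen.interior_eq]
    obtain ⟨ε, hε, hball⟩ := Metric.isOpen_iff.mp isOpen_interior x hx
    obtain ⟨w, hw, hwx, -⟩ := hstar x hxfr ε hε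
    exact hw (interior_subset (hball (by simpa [Metric.mem_ball, dist_eq_norm] using hwx)))
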